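/- Define f : [0,∞) → ℝ by f(u) = u for 0 ≤ u ≤ 1 and f(u) = e^{1−u} for u ≥ 1; let a(t) ≡ 1 and b(t) = 3/(t+c) with a constant c > e^{-1}. Then the function u(t) = 1 + log(t + c) satisfies u(t) > 0 for all t ≥ 0, u̇(t) ≤ −a(t)f(u(t)) + b(t) for all t > 0, and u(t) → +∞ as t → +∞. (Moreover a, b, f satisfy: a, b continuous, a > 0, b ≥ 0, ∫^{+∞} a = +∞, b/a → 0, f continuous with f(0) = 0 and f(u) > 0 for u > 0; thus the conclusion u(t) → 0 of the decay lemma fails when the condition ‘f(u) ≥ c > 0 for u ≥ 1’ is omitted.) -/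

import Mathlib

open Set Filter MeasureTheory

/-- **Counterexample showing condition 4) of the decay lemma is essential.**
With `f u = u` for `0 ≤ u ≤ 1`, `f u = e^{1−u}` for `u ≥ 1`, `a ≡ 1`, `b t = 3/(t+c)` for a
constant `c > e⁻¹`, the function `u t = 1 + log (t + c)` is positive for all `t ≥ 0`,
satisfies `u̇ t ≤ −a t · f (u t) + b t` for all `t > 0`, and `u t → +∞` as `t → +∞`.
Moreover `a, b, f` satisfy all the remaining hypotheses of the decay lemma (`a, b` continuous,
`a > 0`, `b ≥ 0`, `∫^∞ a = ∞`, `b/a → 0`, `f` continuous, `f 0 = 0`, `f > 0` on `(0,∞)`),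
and the conclusion `u t → 0` fails. -/
theorem counterexample_decay_lemma_without_lower_bound
    (c : ℝ) (hc : Real.exp (-1) < c)
    (f a b u : ℝ → ℝ)
    (hf : f = fun w : ℝ => if w ≤ 1 then w else Real.exp (1 - w))
    (ha : a = fun _ : ℝ => (1 : ℝ))
    (hb : b = fun t : ℝ => 3 / (t + c))
    (hu : u = fun t : ℝ => 1 + Real.log (t + c)) :
    (∀ t ∈ Ici (0 : ℝ), 0 < u t) ∧
    (∀ t : ℝ, 0 < t → HasDerivAt u (1 / (t + c)) t ∧
      1 / (t + c) ≤ -a t * f (u t) + b t) ∧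
    Tendsto u atTop atTop ∧
    ContinuousOn a (Ici 0) ∧
    ContinuousOn b (Ici 0) ∧
    (∀ t : ℝ, 0 < t → 0 < a t) ∧
    (∀ t : ℝ, 0 < t → 0 ≤ b t) ∧
    Tendsto (fun t : ℝ => ∫ s in (0 : ℝ)..t, a s) atTop atTop ∧
    Tendsto (fun t : ℝ => b t / a t) atTop (nhds 0) ∧
    ContinuousOn f (Ici 0) ∧ f 0 = 0 ∧ (∀ w : ℝ, 0 < w → 0 < f w) ∧
    ¬ Tendsto u atTop (nhds 0) := by
  have hc0 : (0:ℝ) < c := lt_trans (Real.exp_pos _) hc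
  -- key positivity: t + c > 0 for t ≥ 0
  have hpos : ∀ t : ℝ, 0 ≤ t → 0 < t + c := fun t ht => by linarith
  have huatTop : Tendsto u atTop atTop := by
    rw [hu]
    exact tendsto_atTop_add_const_left _ 1
      (Real.tendsto_log_atTop.comp (tendsto_atTop_add_const_right _ c tendsto_id))
  refine ⟨?_, ?_, huatTop, ?_, ?_, ?_, ?_, ?_, ?_, ?_, ?_, ?_, ?_⟩
  · -- positivity of u
    intro t ht
    simp only [hu]
    have h1 : Real.exp (-1) < t + c := lt_of_lt_of_le hc (by simpa using ht)
    have := Real.lt_log_iff_exp_lt (hpos t ht) |>.mpr h1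
    linarith
  · -- derivative and differential inequality
    intro t ht
    have htc : 0 < t + c := hpos t ht.le
    constructor
    · rw [hu]
      have h1 : HasDerivAt (fun s : ℝ => s + c) 1 t := (hasDerivAt_id t).add_const c
      have h2 : HasDerivAt (fun s : ℝ => Real.log (s + c)) ((t + c)⁻¹ * 1) t :=
        by have := (Real.hasDerivAt_log htc.ne').comp t h1; exact this
      simpa [one_div] using h2.const_add 1
    · rw [ha, hb, hf, hu]
      simp only
      by_cases h : (1 : ℝ) + Real.log (t + c) ≤ 1
      · rw [if_pos h]
        have hlog : Real.log (t + c) ≤ 0 := by linarith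
        have htc1 : t + c ≤ 1 := by
          by_contra hcon
          push_neg at hcon
          exact absurd (Real.log_pos hcon) (not_lt.mpr hlog)
        have h2 : 1 + Real.log (t + c) ≤ 2 / (t + c) := by
          have : (1:ℝ) ≤ 2 / (t + c) := by
            rw [le_div_iff₀ htc]; linarith
          linarith
        have : 1 / (t + c) + (1 + Real.log (t + c)) ≤ 3 / (t + c) := by
          have h3 : 1 / (t + c) + 2 / (t + c) = 3 / (t + c) := by ring
          linarith
        linarith
      · rw [if_neg h]
        have hlog : 0 < Real.log (t + c) := by
          push_neg at h; linarith
        have : Real.exp (1 - (1 + Real.log (t + c))) = (t + c)⁻¹ := by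
          rw [show (1 : ℝ) - (1 + Real.log (t + c)) = -Real.log (t + c) by ring,
            Real.exp_neg, Real.exp_log htc]
        rw [this, inv_eq_one_div]
        have h3 : 1 / (t + c) ≤ 2 / (t + c) := by gcongr <;> norm_num
        have h4 : -(1 * (1 / (t + c))) + 3 / (t + c) = 2 / (t + c) := by ring
        linarith
  · rw [ha]; exact continuousOn_const
  · rw [hb]
    apply ContinuousOn.div continuousOn_const
    · exact (continuous_id.add continuous_const).continuousOn
    · intro t ht; exact (hpos t ht).ne'
  · intro t _; rw [ha]; norm_num
  · intro t ht; rw [hb]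
    positivity
  · rw [ha]
    simp only [intervalIntegral.integral_const, smul_eq_mul, mul_one, sub_zero]
    exact tendsto_id
  · rw [ha, hb]
    simp only [div_one]
    have h1 : Tendsto (fun t : ℝ => t + c) atTop atTop :=
      tendsto_atTop_add_const_right _ c tendsto_id
    have h2 := h1.inv_tendsto_atTop
    have := h2.const_mul (3:ℝ)
    simpa [div_eq_mul_inv] using this
  · rw [hf]
    apply Continuous.continuousOn
    apply Continuous.if_le continuous_id (by continuity) continuous_id continuous_const
    intro x hx
    simp only [id] at hx
    simp [hx]
  · rw [hf]; norm_num
  · intro w hw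
    rw [hf]
    simp only
    by_cases h : w ≤ 1
    · rwa [if_pos h]
    · rw [if_neg h]; exact Real.exp_pos _
  · exact not_tendsto_nhds_of_tendsto_atTop huatTop 0
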